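/- Suppose a differentiable function y : [0, ∞) → [0, ∞) satisfies y' + y ≤ F² on each interval [tₙ, t_{n+1}) with tₙ = nh, and at each tₙ the function may jump but satisfies y(tₙ) ≤ lim_{t↗tₙ} y(t) + K for a constant K ≥ 0 (with y(0) ≤ η² + K). Then y(t) ≤ M₁/(1 - e^{-h}) for all t ≥ 0, where M₁ = η² + (Kγ + F²(1-γ)) + K + F² with γ = e^{-h}. -/

import Mathlib

set_option maxHeartbeats 1000000

/-- On an interval `[a,b)` where `y' + y ≤ F²`, we have the Gronwall-type bound
`y t ≤ F² (1 - e^{a-t}) + y a · e^{a-t}`. -/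
lemma stmt9_interval (F a b : ℝ) (hab : a < b) (y y' : ℝ → ℝ)
    (hdiff : ∀ t ∈ Set.Ico a b, HasDerivWithinAt y (y' t) (Set.Ico a b) t)
    (hineq : ∀ t ∈ Set.Ico a b, y' t + y t ≤ F ^ 2) :
    ∀ t ∈ Set.Ico a b,
      y t ≤ F ^ 2 * (1 - Real.exp (a - t)) + y a * Real.exp (a - t) := by
  set g : ℝ → ℝ := fun t => (y t - F ^ 2) * Real.exp t with hg
  have hder : ∀ x ∈ Set.Ioo a b,
      HasDerivAt g (y' x * Real.exp x + (y x - F ^ 2) * Real.exp x) x := by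
    intro x hx
    have hmem : Set.Ico a b ∈ nhds x := Ico_mem_nhds hx.1 hx.2
    have hda : HasDerivAt y (y' x) x :=
      (hdiff x (Set.Ioo_subset_Ico_self hx)).hasDerivAt hmem
    exact (hda.sub_const (F ^ 2)).mul (Real.hasDerivAt_exp x)
  have hanti : AntitoneOn g (Set.Ico a b) := by
    apply antitoneOn_of_deriv_nonpos (convex_Ico a b)
    · intro t ht
      exact (((hdiff t ht).continuousWithinAt.sub continuousWithinAt_const).mul
        Real.continuous_exp.continuousWithinAt)
    · intro x hx
      rw [interior_Ico] at hx
      exact (hder x hx).differentiableAt.differentiableWithinAt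
    · intro x hx
      rw [interior_Ico] at hx
      rw [(hder x hx).deriv]
      have h1 : y' x + y x ≤ F ^ 2 := hineq x (Set.Ioo_subset_Ico_self hx)
      nlinarith [Real.exp_pos x]
  intro t ht
  have haI : a ∈ Set.Ico a b := ⟨le_refl a, hab⟩
  have hgle : g t ≤ g a := hanti haI ht ht.1
  have hE : Real.exp (a - t) * Real.exp t = Real.exp a := by
    rw [← Real.exp_add]; ring_nf
  simp only [hg] at hgle
  rw [← hE, ← mul_assoc] at hgle
  have h3 : y t - F ^ 2 ≤ (y a - F ^ 2) * Real.exp (a - t) :=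
    (mul_le_mul_iff_of_pos_right (Real.exp_pos t)).mp hgle
  nlinarith [h3]

theorem stmt9 (h F K η : ℝ) (hh : 0 < h) (hF : 0 ≤ F) (hK : 0 ≤ K) (hη : 0 ≤ η)
    (y y' : ℝ → ℝ) (hynn : ∀ t, 0 ≤ y t)
    (hdiff : ∀ n : ℕ, ∀ t ∈ Set.Ico (n * h) ((n + 1) * h),
      HasDerivWithinAt y (y' t) (Set.Ico (n * h) ((n + 1) * h)) t)
    (hineq : ∀ n : ℕ, ∀ t ∈ Set.Ico (n * h) ((n + 1) * h), y' t + y t ≤ F ^ 2)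
    (hjump : ∀ n : ℕ, ∃ ℓ : ℝ,
      Filter.Tendsto y (nhdsWithin ((n + 1) * h) (Set.Iio ((n + 1) * h))) (nhds ℓ) ∧
      y ((n + 1) * h) ≤ ℓ + K)
    (h0 : y 0 ≤ η ^ 2 + K) :
    ∀ t ≥ (0 : ℝ), y t ≤
      (η ^ 2 + (K * Real.exp (-h) + F ^ 2 * (1 - Real.exp (-h))) + K + F ^ 2)
        / (1 - Real.exp (-h)) := by
  set γ := Real.exp (-h) with hγdef
  have hγpos : 0 < γ := Real.exp_pos _
  have hγlt : γ < 1 := Real.exp_lt_one_iff.mpr (by linarith)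
  have hd : 0 < 1 - γ := by linarith
  set C : ℝ := max (η ^ 2 + K) ((F ^ 2 * (1 - γ) + K) / (1 - γ)) with hC
  -- step lemma: on each interval, bound y by initial value
  have hstep : ∀ n : ℕ, ∀ t ∈ Set.Ico ((n : ℝ) * h) (((n : ℝ) + 1) * h),
      y t ≤ F ^ 2 * (1 - Real.exp ((n : ℝ) * h - t))
        + y ((n : ℝ) * h) * Real.exp ((n : ℝ) * h - t) := by
    intro n
    exact stmt9_interval F ((n : ℝ) * h) (((n : ℝ) + 1) * h)
      (by nlinarith) y y' (hdiff n) (hineq n)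
  -- bound at each node
  have hnode : ∀ n : ℕ, y ((n : ℝ) * h) ≤ C := by
    intro n
    induction n with
    | zero =>
      simp only [Nat.cast_zero, zero_mul]
      exact le_trans h0 (le_max_left _ _)
    | succ n ih =>
      obtain ⟨ℓ, hℓt, hℓK⟩ := hjump n
      have hev : ∀ᶠ t in nhdsWithin (((n : ℝ) + 1) * h) (Set.Iio (((n : ℝ) + 1) * h)),
          y t ≤ F ^ 2 * (1 - Real.exp ((n : ℝ) * h - t))
            + y ((n : ℝ) * h) * Real.exp ((n : ℝ) * h - t) := by
        have hmem : Set.Ioo ((n : ℝ) * h) (((n : ℝ) + 1) * h) ∈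
            nhdsWithin (((n : ℝ) + 1) * h) (Set.Iio (((n : ℝ) + 1) * h)) :=
          Ioo_mem_nhdsLT (by nlinarith)
        filter_upwards [hmem] with t ht
        exact hstep n t (Set.Ioo_subset_Ico_self ht)
      have hc : Continuous (fun t : ℝ => F ^ 2 * (1 - Real.exp ((n : ℝ) * h - t))
          + y ((n : ℝ) * h) * Real.exp ((n : ℝ) * h - t)) := by
        have hce : Continuous fun t : ℝ => Real.exp ((n : ℝ) * h - t) :=
          Real.continuous_exp.comp (continuous_const.sub continuous_id)
        exact (continuous_const.mul (continuous_const.sub hce)).add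
          (continuous_const.mul hce)
      have hval : (n : ℝ) * h - ((n : ℝ) + 1) * h = -h := by ring
      have htend : Filter.Tendsto
          (fun t => F ^ 2 * (1 - Real.exp ((n : ℝ) * h - t))
            + y ((n : ℝ) * h) * Real.exp ((n : ℝ) * h - t))
          (nhdsWithin (((n : ℝ) + 1) * h) (Set.Iio (((n : ℝ) + 1) * h)))
          (nhds (F ^ 2 * (1 - γ) + y ((n : ℝ) * h) * γ)) := by
        have h' := (hc.tendsto (((n : ℝ) + 1) * h)).mono_left
          (nhdsWithin_le_nhds (s := Set.Iio (((n : ℝ) + 1) * h)))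
        simpa [hval, hγdef] using h'
      have hℓle : ℓ ≤ F ^ 2 * (1 - γ) + y ((n : ℝ) * h) * γ :=
        le_of_tendsto_of_tendsto hℓt htend hev
      have hCd : F ^ 2 * (1 - γ) + K ≤ C * (1 - γ) := by
        have h1 : (F ^ 2 * (1 - γ) + K) / (1 - γ) ≤ C := le_max_right _ _
        have h2 : ((F ^ 2 * (1 - γ) + K) / (1 - γ)) * (1 - γ) = F ^ 2 * (1 - γ) + K :=
          div_mul_cancel₀ _ (ne_of_gt hd)
        nlinarith [mul_le_mul_of_nonneg_right h1 hd.le]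
      have hexp : C * (1 - γ) = C - C * γ := by ring
      have hyγ : y ((n : ℝ) * h) * γ ≤ C * γ :=
        mul_le_mul_of_nonneg_right ih hγpos.le
      have hcast : ((n + 1 : ℕ) : ℝ) = (n : ℝ) + 1 := by push_cast; ring
      rw [hcast]
      linarith [hℓK, hℓle, hyγ, hCd]
  -- final bound
  intro t ht
  set n : ℕ := ⌊t / h⌋₊ with hn
  have h1 : (n : ℝ) * h ≤ t := by
    have hfl := Nat.floor_le (by positivity : 0 ≤ t / h)
    calc (n : ℝ) * h ≤ (t / h) * h := by nlinarith
      _ = t := by field_simp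
  have h2 : t < ((n : ℝ) + 1) * h := by
    have hfl := Nat.lt_floor_add_one (t / h)
    calc t = (t / h) * h := by field_simp
      _ < ((n : ℝ) + 1) * h := by nlinarith
  have hb := hstep n t ⟨h1, h2⟩
  set E := Real.exp ((n : ℝ) * h - t) with hE
  have hE1 : E ≤ 1 := Real.exp_le_one_iff.mpr (by linarith)
  have hE0 : 0 < E := Real.exp_pos _
  have hCnn : 0 ≤ C := le_trans (hynn 0) (by simpa using hnode 0)
  have hmax : y t ≤ max (F ^ 2) C := by
    have hy := hnode n
    have hM1 : F ^ 2 ≤ max (F ^ 2) C := le_max_left _ _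
    have hM2 : y ((n : ℝ) * h) ≤ max (F ^ 2) C := le_trans hy (le_max_right _ _)
    have p1 : 0 ≤ (max (F ^ 2) C - F ^ 2) * (1 - E) :=
      mul_nonneg (by linarith) (by linarith)
    have p2 : 0 ≤ (max (F ^ 2) C - y ((n : ℝ) * h)) * E :=
      mul_nonneg (by linarith) hE0.le
    nlinarith [p1, p2, hb]
  refine le_trans hmax ?_
  rw [le_div_iff₀ hd]
  have hη2 : 0 ≤ η ^ 2 := sq_nonneg η
  have hF2 : 0 ≤ F ^ 2 := sq_nonneg F
  have hKγ : 0 ≤ K * γ := mul_nonneg hK hγpos.le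
  have hη2γ : 0 ≤ η ^ 2 * γ := mul_nonneg hη2 hγpos.le
  have hF2γ : 0 ≤ F ^ 2 * γ := mul_nonneg hF2 hγpos.le
  have hF2d : 0 ≤ F ^ 2 * (1 - γ) := mul_nonneg hF2 hd.le
  rcases max_cases (F ^ 2) C with ⟨heq, _⟩ | ⟨heq, _⟩
  · rw [heq]; nlinarith
  · rw [heq, hC]
    rcases max_cases (η ^ 2 + K) ((F ^ 2 * (1 - γ) + K) / (1 - γ)) with
      ⟨heq2, _⟩ | ⟨heq2, _⟩
    · rw [heq2]; nlinarith
    · have hdm : (F ^ 2 * (1 - γ) + K) / (1 - γ) * (1 - γ) = F ^ 2 * (1 - γ) + K :=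
        div_mul_cancel₀ (F ^ 2 * (1 - γ) + K) (ne_of_gt hd)
      rw [heq2, hdm]; nlinarith
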